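/- Let 𝒮 be the multiplicative monoid generated by pairwise coprime integers N₁,…,N_s ≥ 2, and let a ≥ 0. Then there are constants a₂, a₃ ≥ 0 such that for all z in the open unit disc, Σ_{N ∈ 𝒮} log(1 + a|z|^N) ≤ a₂ + a₃·|log|log|z|||^s. In particular, for 1/2 ≤ |z| < 1 one has Σ_{N ∈ 𝒮} log(1 + a|z|^N) ≤ a₄·|log(1 − |z|)|^s for some constant a₄. -/

import Mathlib

lemma pi_prod_tsum (g : ℕ → ℝ) (hg0 : ∀ n, 0 ≤ g n) (hg : Summable g) :
    ∀ s : ℕ, Summable (fun ν : Fin s → ℕ => ∏ i, g (ν i)) ∧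
      (∑' ν : Fin s → ℕ, ∏ i, g (ν i)) = (∑' n, g n) ^ s := by
  intro s
  induction s with
  | zero =>
      constructor
      · exact Summable.of_finite
      · simp [tsum_eq_single (default : Fin 0 → ℕ)
          (fun b hb => absurd (Subsingleton.elim b default) hb)]
  | succ s ih =>
      have hprodnn : ∀ ν : Fin s → ℕ, 0 ≤ ∏ i, g (ν i) :=
        fun ν => Finset.prod_nonneg fun i _ => hg0 _
      have hF : Summable (fun p : ℕ × (Fin s → ℕ) => g p.1 * ∏ i, g (p.2 i)) :=
        Summable.mul_of_nonneg (f := g) (g := fun ν : Fin s → ℕ => ∏ i, g (ν i)) hg ih.1 (fun n => hg0 n) hprodnn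
      set e : ℕ × (Fin s → ℕ) ≃ (Fin (s+1) → ℕ) := Fin.consEquiv (fun _ => ℕ) with he
      have key : ∀ p : ℕ × (Fin s → ℕ),
          (∏ i, g ((e p) i)) = g p.1 * ∏ i, g (p.2 i) := by
        intro p
        rw [Fin.prod_univ_succ]
        simp [he, Fin.consEquiv]
      constructor
      · rw [← Equiv.summable_iff e]
        exact (summable_congr key).mpr hF
      · calc (∑' ν : Fin (s+1) → ℕ, ∏ i, g (ν i))
            = ∑' p : ℕ × (Fin s → ℕ), ∏ i, g ((e p) i) :=
              (e.tsum_eq (fun ν : Fin (s+1) → ℕ => ∏ i, g (ν i))).symm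
          _ = ∑' p : ℕ × (Fin s → ℕ), g p.1 * ∏ i, g (p.2 i) := tsum_congr key
          _ = (∑' n, g n) * (∑' ν : Fin s → ℕ, ∏ i, g (ν i)) :=
              (Summable.tsum_mul_tsum (f := g) (g := fun ν : Fin s → ℕ => ∏ i, g (ν i)) hg ih.1 hF).symm
          _ = (∑' n, g n) ^ (s+1) := by rw [ih.2, pow_succ, mul_comm]

lemma expsum_summable {μ : ℝ} (hμ : 0 < μ) :
    Summable (fun n : ℕ => Real.exp (-(μ * 2 ^ n))) := by
  refine Summable.of_nonneg_of_le (fun n => (Real.exp_pos _).le) (fun n => ?_)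
    (summable_geometric_of_lt_one (Real.exp_pos (-μ)).le
      (Real.exp_lt_one_iff.mpr (by linarith)))
  rw [← Real.exp_nat_mul]
  apply Real.exp_le_exp.mpr
  have h2 : (n : ℝ) ≤ 2 ^ n := by
    exact_mod_cast (Nat.lt_two_pow_self (n := n)).le
  nlinarith

lemma expsum_bound {μ : ℝ} (hμ : 0 < μ) :
    (∑' n : ℕ, Real.exp (-(μ * 2 ^ n))) ≤ |Real.log μ| / Real.log 2 + 2 := by
  set n₀ : ℕ := ⌈Real.logb 2 μ⁻¹⌉₊ with hn₀
  have h2pos : (0:ℝ) < Real.log 2 := Real.log_pos (by norm_num)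
  have hkey : 1 ≤ μ * 2 ^ n₀ := by
    rcases le_or_gt 1 μ with h | h
    · have : (1:ℝ) ≤ 2 ^ n₀ := one_le_pow₀ (by norm_num)
      nlinarith
    · have hinv : 1 < μ⁻¹ := (one_lt_inv₀ hμ).mpr h
      have h1 : μ⁻¹ ≤ 2 ^ n₀ := by
        have := Nat.le_ceil (Real.logb 2 μ⁻¹)
        calc μ⁻¹ = 2 ^ Real.logb 2 μ⁻¹ := (Real.rpow_logb (by norm_num) (by norm_num) (by positivity)).symm
          _ ≤ 2 ^ ((n₀ : ℝ)) := Real.rpow_le_rpow_of_exponent_le (by norm_num) this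
          _ = 2 ^ n₀ := by rw [Real.rpow_natCast]
      calc (1:ℝ) = μ * μ⁻¹ := by field_simp
        _ ≤ μ * 2 ^ n₀ := by nlinarith
  -- split
  have hsum := expsum_summable hμ
  have hsplit := (Summable.sum_add_tsum_nat_add (f := fun n : ℕ => Real.exp (-(μ * 2 ^ n))) n₀ hsum).symm
  rw [hsplit]
  have hhead : (∑ n ∈ Finset.range n₀, Real.exp (-(μ * 2 ^ n))) ≤ n₀ := by
    calc (∑ n ∈ Finset.range n₀, Real.exp (-(μ * 2 ^ n)))
        ≤ ∑ n ∈ Finset.range n₀, 1 := Finset.sum_le_sum (fun n _ => by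
          rw [← Real.exp_zero]; apply Real.exp_le_exp.mpr; simp; positivity)
      _ = n₀ := by simp
  have htail : (∑' j : ℕ, Real.exp (-(μ * 2 ^ (j + n₀)))) ≤ 1 := by
    have hterm : ∀ j : ℕ, Real.exp (-(μ * 2 ^ (j + n₀))) ≤ Real.exp (-1) * Real.exp (-1) ^ j := by
      intro j
      rw [← Real.exp_nat_mul, ← Real.exp_add]
      apply Real.exp_le_exp.mpr
      have hj : (j:ℝ) + 1 ≤ 2 ^ j := by exact_mod_cast Nat.lt_two_pow_self (n := j)
      have : (2:ℝ) ^ (j + n₀) = 2 ^ j * 2 ^ n₀ := by rw [pow_add]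
      nlinarith [pow_pos (zero_lt_two (α := ℝ)) j, pow_pos (zero_lt_two (α := ℝ)) n₀]
    have hgeo : Summable (fun j : ℕ => Real.exp (-1) * Real.exp (-1) ^ j) :=
      (summable_geometric_of_lt_one (Real.exp_pos _).le
        (Real.exp_lt_one_iff.mpr (by norm_num))).mul_left _
    calc (∑' j : ℕ, Real.exp (-(μ * 2 ^ (j + n₀))))
        ≤ ∑' j : ℕ, Real.exp (-1) * Real.exp (-1) ^ j :=
          Summable.tsum_le_tsum hterm ((summable_nat_add_iff (f := fun n : ℕ => Real.exp (-(μ * 2 ^ n))) n₀).mpr hsum) hgeo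
      _ = Real.exp (-1) * (1 - Real.exp (-1))⁻¹ := by
          rw [tsum_mul_left, tsum_geometric_of_lt_one (Real.exp_pos _).le
            (Real.exp_lt_one_iff.mpr (by norm_num))]
      _ ≤ 1 := by
          have he : Real.exp (-1) < 1/2 := by
            rw [Real.exp_neg]
            rw [inv_lt_comm₀ (Real.exp_pos _) (by norm_num)]
            calc (1/2 : ℝ)⁻¹ = 2 := by norm_num
              _ < Real.exp 1 := by linarith [Real.exp_one_gt_d9]
          have h1 : (0:ℝ) < 1 - Real.exp (-1) := by linarith
          rw [mul_inv_le_iff₀ h1]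
          linarith
  have hceil : (n₀ : ℝ) ≤ |Real.log μ| / Real.log 2 + 1 := by
    rcases le_or_gt 1 μ with h | h
    · have : Real.logb 2 μ⁻¹ ≤ 0 := by
        apply Real.logb_nonpos (by norm_num)
        · positivity
        · exact inv_le_one_of_one_le₀ h
      have hz : n₀ = 0 := Nat.ceil_eq_zero.mpr this
      rw [hz]
      simp only [Nat.cast_zero]
      positivity
    · have hlb : Real.logb 2 μ⁻¹ = |Real.log μ| / Real.log 2 := by
        rw [Real.logb, Real.log_inv, abs_of_neg (Real.log_neg hμ h)]
      have h0 : (0:ℝ) ≤ Real.logb 2 μ⁻¹ := by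
        rw [hlb]; positivity
      calc (n₀ : ℝ) ≤ Real.logb 2 μ⁻¹ + 1 := (Nat.ceil_lt_add_one h0).le
        _ = |Real.log μ| / Real.log 2 + 1 := by rw [hlb]
  linarith

lemma two_pow_add_le (x y : ℝ) (hx : 0 ≤ x) (hy : 0 ≤ y) (s : ℕ) :
    (x + y) ^ s ≤ 2 ^ s * (x ^ s + y ^ s) := by
  rcases le_total x y with h | h
  · calc (x + y) ^ s ≤ (2 * y) ^ s := pow_le_pow_left₀ (by linarith) (by linarith) s
      _ = 2 ^ s * y ^ s := mul_pow 2 y s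
      _ ≤ 2 ^ s * (x ^ s + y ^ s) := by
        have := pow_nonneg hx s
        have h2 : (0:ℝ) ≤ 2 ^ s := by positivity
        nlinarith
  · calc (x + y) ^ s ≤ (2 * x) ^ s := pow_le_pow_left₀ (by linarith) (by linarith) s
      _ = 2 ^ s * x ^ s := mul_pow 2 x s
      _ ≤ 2 ^ s * (x ^ s + y ^ s) := by
        have := pow_nonneg hy s
        have h2 : (0:ℝ) ≤ 2 ^ s := by positivity
        nlinarith

-- Lemma A
lemma lemA (s : ℕ) (hs : 1 ≤ s) (Nf : Fin s → ℕ) (h2 : ∀ i, 2 ≤ Nf i)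
    {r : ℝ} (hr0 : 0 < r) (hr1 : r < 1) (ν : Fin s → ℕ) :
    r ^ (∏ i, Nf i ^ ν i) ≤ ∏ i, Real.exp (-(-Real.log r / s * 2 ^ ν i)) := by
  have hlog : Real.log r < 0 := Real.log_neg hr0 hr1
  have hsR : (0:ℝ) < s := by exact_mod_cast hs
  have hNf : 2 ^ (∑ i, ν i) ≤ ∏ i, Nf i ^ ν i := by
    calc 2 ^ (∑ i, ν i) = ∏ i, 2 ^ ν i := (Finset.prod_pow_eq_pow_sum _ _ _).symm
      _ ≤ ∏ i, Nf i ^ ν i :=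
        Finset.prod_le_prod (fun i _ => Nat.zero_le _)
          (fun i _ => Nat.pow_le_pow_left (h2 i) (ν i))
  have h1 : r ^ (∏ i, Nf i ^ ν i) ≤ r ^ (2 ^ ∑ i, ν i) :=
    pow_le_pow_of_le_one hr0.le hr1.le hNf
  have hsum : ∑ i, (2:ℝ) ^ ν i ≤ (s:ℝ) * 2 ^ (∑ i, ν i) := by
    have : ∀ i : Fin s, (2:ℝ) ^ ν i ≤ 2 ^ (∑ j, ν j) := fun i =>
      pow_le_pow_right₀ (by norm_num) (Finset.single_le_sum (fun j _ => Nat.zero_le _)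
        (Finset.mem_univ i))
    calc ∑ i, (2:ℝ) ^ ν i ≤ ∑ _i : Fin s, (2:ℝ) ^ (∑ j, ν j) := Finset.sum_le_sum fun i _ => this i
      _ = (s:ℝ) * 2 ^ (∑ j, ν j) := by simp [Finset.sum_const, Finset.card_univ, nsmul_eq_mul]
  have h3 : ((2:ℝ) ^ (∑ i, ν i)) * Real.log r ≤ ∑ i, Real.log r / s * 2 ^ ν i := by
    have hms : ∑ i, Real.log r / s * (2:ℝ) ^ ν i = (Real.log r / s) * ∑ i, (2:ℝ) ^ ν i := by
      rw [Finset.mul_sum]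
    rw [hms]
    have hnp : Real.log r / s ≤ 0 := div_nonpos_of_nonpos_of_nonneg hlog.le hsR.le
    have := mul_le_mul_of_nonpos_left hsum hnp
    calc ((2:ℝ) ^ (∑ i, ν i)) * Real.log r
        = Real.log r / s * ((s:ℝ) * 2 ^ (∑ i, ν i)) := by field_simp
      _ ≤ Real.log r / s * ∑ i, (2:ℝ) ^ ν i := this
  calc r ^ (∏ i, Nf i ^ ν i) ≤ r ^ (2 ^ ∑ i, ν i) := h1
    _ = Real.exp (((2:ℕ) ^ ∑ i, ν i : ℕ) * Real.log r) := by
        rw [Real.exp_nat_mul, Real.exp_log hr0]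
    _ ≤ Real.exp (∑ i, Real.log r / s * 2 ^ ν i) := by
        apply Real.exp_le_exp.mpr
        calc (((2:ℕ) ^ ∑ i, ν i : ℕ) : ℝ) * Real.log r
            = ((2:ℝ) ^ (∑ i, ν i)) * Real.log r := by push_cast; ring
          _ ≤ _ := h3
    _ = ∏ i, Real.exp (Real.log r / s * 2 ^ ν i) := Real.exp_sum _ _
    _ = ∏ i, Real.exp (-(-Real.log r / s * 2 ^ ν i)) := by
        apply Finset.prod_congr rfl
        intro i _
        congr 1
        ring



/-- Let `𝒮` be the multiplicative monoid generated by pairwise coprime `N₁,…,N_s ≥ 2`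
(elements indexed by exponent tuples) and let `a ≥ 0`. Then there are constants
`a₂, a₃ ≥ 0` with `Σ_{N ∈ 𝒮} log(1 + a|z|^N) ≤ a₂ + a₃·|log|log|z|||^s` for all `z` in
the unit disc, and a constant `a₄ ≥ 0` with
`Σ_{N ∈ 𝒮} log(1 + a|z|^N) ≤ a₄·|log(1 − |z|)|^s` for `1/2 ≤ |z| < 1`. -/
theorem stmt_18 (s : ℕ) (hs : 1 ≤ s) (Nf : Fin s → ℕ)
    (h2 : ∀ i, 2 ≤ Nf i) (hcop : ∀ i j, i ≠ j → Nat.Coprime (Nf i) (Nf j))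
    (a : ℝ) (ha : 0 ≤ a) :
    ∃ a₂ a₃ a₄ : ℝ, 0 ≤ a₂ ∧ 0 ≤ a₃ ∧ 0 ≤ a₄ ∧
      (∀ z : ℂ, ‖z‖ < 1 →
        (∑' ν : Fin s → ℕ, Real.log (1 + a * ‖z‖ ^ (∏ i, Nf i ^ ν i))) ≤
          a₂ + a₃ * (abs (Real.log (abs (Real.log ‖z‖)))) ^ s) ∧
      (∀ z : ℂ, 1 / 2 ≤ ‖z‖ → ‖z‖ < 1 →
        (∑' ν : Fin s → ℕ, Real.log (1 + a * ‖z‖ ^ (∏ i, Nf i ^ ν i))) ≤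
          a₄ * |Real.log (1 - ‖z‖)| ^ s) := by
  have h2pos : (0:ℝ) < Real.log 2 := Real.log_pos (by norm_num)
  have hsR : (1:ℝ) ≤ s := by exact_mod_cast hs
  set c₁ : ℝ := Real.log s / Real.log 2 + 2 with hc₁
  have hc₁0 : 0 ≤ c₁ := by
    have : 0 ≤ Real.log s := Real.log_nonneg hsR
    positivity
  set a₂ : ℝ := a * 2 ^ s * c₁ ^ s with ha₂
  set a₃ : ℝ := a * 2 ^ s / Real.log 2 ^ s with ha₃
  have ha₂0 : 0 ≤ a₂ := by positivity
  have ha₃0 : 0 ≤ a₃ := by positivity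
  set a₄ : ℝ := a₂ / Real.log 2 ^ s + a₃ with ha₄
  have ha₄0 : 0 ≤ a₄ := by positivity
  have hmain : ∀ z : ℂ, ‖z‖ < 1 →
      (∑' ν : Fin s → ℕ, Real.log (1 + a * ‖z‖ ^ (∏ i, Nf i ^ ν i))) ≤
        a₂ + a₃ * (abs (Real.log (abs (Real.log ‖z‖)))) ^ s := by
    intro z hz1
    set r : ℝ := ‖z‖ with hr
    rcases eq_or_lt_of_le (norm_nonneg z) with h0 | hr0
    · -- r = 0
      have hr0' : r = 0 := h0.symm
      have hzero : ∀ ν : Fin s → ℕ, Real.log (1 + a * r ^ (∏ i, Nf i ^ ν i)) = 0 := by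
        intro ν
        have hNpos : 0 < ∏ i, Nf i ^ ν i :=
          Finset.prod_pos fun i _ => pow_pos (by have := h2 i; omega) _
        rw [hr0', zero_pow hNpos.ne', mul_zero, add_zero, Real.log_one]
      have : (∑' ν : Fin s → ℕ, Real.log (1 + a * r ^ (∏ i, Nf i ^ ν i))) = 0 := by
        rw [tsum_congr hzero]; exact tsum_zero
      rw [this, hr0']
      simp only [Real.log_zero, abs_zero]
      rw [zero_pow (Nat.one_le_iff_ne_zero.mp hs)]
      linarith
    · -- 0 < r < 1
      have hlog : Real.log r < 0 := Real.log_neg hr0 hz1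
      set lam : ℝ := -Real.log r with hlam
      have hlam0 : 0 < lam := by simp [hlam]; linarith
      set μ : ℝ := lam / s with hμdef
      have hμ : 0 < μ := div_pos hlam0 (by linarith)
      set g : ℕ → ℝ := fun n => Real.exp (-(μ * 2 ^ n)) with hgdef
      have hg0 : ∀ n, 0 ≤ g n := fun n => (Real.exp_pos _).le
      have hg : Summable g := expsum_summable hμ
      obtain ⟨hpiS, hpiE⟩ := pi_prod_tsum g hg0 hg s
      have hterm : ∀ ν : Fin s → ℕ,
          Real.log (1 + a * r ^ (∏ i, Nf i ^ ν i)) ≤ a * ∏ i, g (ν i) := by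
        intro ν
        have hp : (0:ℝ) ≤ r ^ (∏ i, Nf i ^ ν i) := pow_nonneg hr0.le _
        have hlt : (0:ℝ) < 1 + a * r ^ (∏ i, Nf i ^ ν i) := by nlinarith
        have hlog1 : Real.log (1 + a * r ^ (∏ i, Nf i ^ ν i)) ≤ a * r ^ (∏ i, Nf i ^ ν i) := by
          have := Real.log_le_sub_one_of_pos hlt
          linarith
        have hA : r ^ (∏ i, Nf i ^ ν i) ≤ ∏ i, g (ν i) := by
          have := lemA s hs Nf h2 hr0 hz1 ν
          simpa [hgdef, hμdef, hlam, neg_div] using this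
        calc Real.log (1 + a * r ^ (∏ i, Nf i ^ ν i)) ≤ a * r ^ (∏ i, Nf i ^ ν i) := hlog1
          _ ≤ a * ∏ i, g (ν i) := mul_le_mul_of_nonneg_left hA ha
      have hnn : ∀ ν : Fin s → ℕ, 0 ≤ Real.log (1 + a * r ^ (∏ i, Nf i ^ ν i)) := by
        intro ν
        apply Real.log_nonneg
        have hp : (0:ℝ) ≤ r ^ (∏ i, Nf i ^ ν i) := pow_nonneg hr0.le _
        nlinarith
      have hsA : Summable (fun ν : Fin s → ℕ => a * ∏ i, g (ν i)) := hpiS.mul_left a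
      have hsum0 : Summable (fun ν : Fin s → ℕ => Real.log (1 + a * r ^ (∏ i, Nf i ^ ν i))) :=
        Summable.of_nonneg_of_le hnn hterm hsA
      have hstep1 : (∑' ν : Fin s → ℕ, Real.log (1 + a * r ^ (∏ i, Nf i ^ ν i)))
          ≤ a * (∑' n, g n) ^ s := by
        calc (∑' ν : Fin s → ℕ, Real.log (1 + a * r ^ (∏ i, Nf i ^ ν i)))
            ≤ ∑' ν : Fin s → ℕ, a * ∏ i, g (ν i) := Summable.tsum_le_tsum hterm hsum0 hsA
          _ = a * ∑' ν : Fin s → ℕ, ∏ i, g (ν i) := tsum_mul_left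
          _ = a * (∑' n, g n) ^ s := by rw [hpiE]
      -- bound the geometric-type sum
      set L : ℝ := |Real.log lam| with hL
      have hBnn : 0 ≤ ∑' n, g n := tsum_nonneg hg0
      have hB : (∑' n, g n) ≤ L / Real.log 2 + c₁ := by
        have hb1 : (∑' n, g n) ≤ |Real.log μ| / Real.log 2 + 2 := expsum_bound hμ
        have hlogμ : |Real.log μ| ≤ L + Real.log s := by
          rw [hμdef, Real.log_div hlam0.ne' (by positivity : (s:ℝ) ≠ 0)]
          calc |Real.log lam - Real.log s| ≤ |Real.log lam| + |Real.log s| := abs_sub _ _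
            _ = L + Real.log s := by rw [hL, abs_of_nonneg (Real.log_nonneg hsR)]
        calc (∑' n, g n) ≤ |Real.log μ| / Real.log 2 + 2 := hb1
          _ ≤ (L + Real.log s) / Real.log 2 + 2 := by gcongr
          _ = L / Real.log 2 + c₁ := by rw [hc₁]; field_simp; ring
      have hLnn : 0 ≤ L := abs_nonneg _
      have hfinal : a * (∑' n, g n) ^ s ≤ a₂ + a₃ * L ^ s := by
        have hpowle : (∑' n, g n) ^ s ≤ (L / Real.log 2 + c₁) ^ s :=
          pow_le_pow_left₀ hBnn hB s
        have hsplit : (L / Real.log 2 + c₁) ^ s ≤ 2 ^ s * ((L / Real.log 2) ^ s + c₁ ^ s) :=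
          two_pow_add_le _ _ (by positivity) hc₁0 s
        have hdiv : (L / Real.log 2) ^ s = L ^ s / Real.log 2 ^ s := div_pow _ _ _
        calc a * (∑' n, g n) ^ s ≤ a * (2 ^ s * ((L / Real.log 2) ^ s + c₁ ^ s)) := by
              apply mul_le_mul_of_nonneg_left _ ha
              exact le_trans hpowle hsplit
          _ = a₂ + a₃ * L ^ s := by
              rw [hdiv, ha₂, ha₃]; field_simp; ring
      have habs : abs (Real.log r) = lam := abs_of_neg hlog
      calc (∑' ν : Fin s → ℕ, Real.log (1 + a * r ^ (∏ i, Nf i ^ ν i)))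
          ≤ a * (∑' n, g n) ^ s := hstep1
        _ ≤ a₂ + a₃ * L ^ s := hfinal
        _ = a₂ + a₃ * (abs (Real.log (abs (Real.log r)))) ^ s := by rw [habs]
  refine ⟨a₂, a₃, a₄, ha₂0, ha₃0, ha₄0, hmain, ?_⟩
  intro z hhalf hz1
  set r : ℝ := ‖z‖ with hr
  have hr0 : (0:ℝ) < r := by linarith
  have hlog : Real.log r < 0 := Real.log_neg hr0 hz1
  set lam : ℝ := -Real.log r with hlam
  have hlam0 : 0 < lam := by simp [hlam]; linarith
  have h1r : 0 < 1 - r := by linarith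
  have hlamge : 1 - r ≤ lam := by
    have := Real.log_le_sub_one_of_pos hr0
    simp [hlam]; linarith
  have hlamlt : lam ≤ Real.log 2 := by
    have : Real.log (1/2) ≤ Real.log r := Real.log_le_log (by norm_num) hhalf
    rw [Real.log_div one_ne_zero (by norm_num), Real.log_one] at this
    simp [hlam]; linarith
  have hlam1 : lam < 1 := lt_of_le_of_lt hlamlt (by
    linarith [Real.log_two_lt_d9])
  have hloglam : Real.log lam < 0 := Real.log_neg hlam0 hlam1
  set T : ℝ := |Real.log (1 - r)| with hT
  have hTval : T = -Real.log (1 - r) := abs_of_neg (Real.log_neg h1r (by linarith))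
  have hTge : Real.log 2 ≤ T := by
    have h12 : 1 - r ≤ 1/2 := by linarith
    have : Real.log (1 - r) ≤ Real.log (1/2) := Real.log_le_log h1r h12
    rw [Real.log_div one_ne_zero (by norm_num), Real.log_one] at this
    rw [hTval]; linarith
  have hLle : |Real.log lam| ≤ T := by
    rw [abs_of_neg hloglam, hTval]
    have : Real.log (1 - r) ≤ Real.log lam := Real.log_le_log h1r hlamge
    linarith
  have hmainz := hmain z hz1
  have habs : abs (Real.log r) = lam := abs_of_neg hlog
  rw [habs] at hmainz
  have hTpos : 0 < T := lt_of_lt_of_le h2pos hTge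
  have hpow1 : |Real.log lam| ^ s ≤ T ^ s := pow_le_pow_left₀ (abs_nonneg _) hLle s
  have hpow2 : Real.log 2 ^ s ≤ T ^ s := pow_le_pow_left₀ h2pos.le hTge s
  have h2s : (0:ℝ) < Real.log 2 ^ s := by positivity
  calc (∑' ν : Fin s → ℕ, Real.log (1 + a * r ^ (∏ i, Nf i ^ ν i)))
      ≤ a₂ + a₃ * |Real.log lam| ^ s := hmainz
    _ ≤ a₂ / Real.log 2 ^ s * T ^ s + a₃ * T ^ s := by
        have e1 : a₃ * |Real.log lam| ^ s ≤ a₃ * T ^ s := mul_le_mul_of_nonneg_left hpow1 ha₃0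
        have e2 : a₂ ≤ a₂ / Real.log 2 ^ s * T ^ s := by
          rw [div_mul_eq_mul_div, le_div_iff₀ h2s]
          exact mul_le_mul_of_nonneg_left hpow2 ha₂0
        linarith
    _ = a₄ * T ^ s := by rw [ha₄]; ring
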